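/- Let ⊗ be a continuous t-norm on [0,1] and X a partially ordered compact space. The assignment A ↦ Φ_A is a bijection from the set of closed upper subsets of X onto the set of maps Φ : CX → [0,1] satisfying (Mon), (Act), (Sup), (Ten)lax and (Min). If moreover ⊗ has no nilpotent elements, then A ↦ Φ_A is a bijection from the set of closed upper subsets of X onto the set of maps Φ : CX → [0,1] satisfying (Mon), (Act), (Sup) and (Min). -/

import Mathlib

open unitInterval Set

/-- A continuous t-norm on the unit interval `[0,1]`. -/
structure ContinuousTNorm where
  mul : I → I → I
  comm : ∀ x y, mul x y = mul y x
  assoc : ∀ x y z, mul (mul x y) z = mul x (mul y z)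
  mono : ∀ ⦃x₁ x₂ y₁ y₂ : I⦄, x₁ ≤ x₂ → y₁ ≤ y₂ → mul x₁ y₁ ≤ mul x₂ y₂
  continuous : Continuous fun p : I × I => mul p.1 p.2
  one_mul' : ∀ x, mul 1 x = x

/-- The `n`-fold `⊗`-power `xⁿ`. -/
def ContinuousTNorm.pow (T : ContinuousTNorm) (x : I) : ℕ → I
  | 0 => 1
  | n + 1 => T.mul x (T.pow x n)


/-- A continuous antitone (monotone of type `X → [0,1]ᵒᵖ`) map. -/
structure CMap (X : Type*) [TopologicalSpace X] [Preorder X] where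
  toFun : X → I
  continuous' : Continuous toFun
  antitone' : Antitone toFun

namespace CMap

variable {X : Type*} [TopologicalSpace X] [Preorder X]

/-- The constant map `1`. -/
def one : CMap X := ⟨fun _ => 1, continuous_const, fun _ _ _ => le_rfl⟩

/-- Pointwise tensor `ψ₁ ⊗ ψ₂`. -/
def tens (T : ContinuousTNorm) (ψ₁ ψ₂ : CMap X) : CMap X where
  toFun x := T.mul (ψ₁.toFun x) (ψ₂.toFun x)
  continuous' := T.continuous.comp (ψ₁.continuous'.prodMk ψ₂.continuous')
  antitone' := fun _ _ h => T.mono (ψ₁.antitone' h) (ψ₂.antitone' h)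

/-- Pointwise action `u ⊗ ψ` of a scalar `u ∈ [0,1]`. -/
def smul (T : ContinuousTNorm) (u : I) (ψ : CMap X) : CMap X where
  toFun x := T.mul u (ψ.toFun x)
  continuous' := T.continuous.comp (continuous_const.prodMk ψ.continuous')
  antitone' := fun _ _ h => T.mono le_rfl (ψ.antitone' h)

/-- Pointwise binary supremum `ψ₁ ∨ ψ₂`. -/
noncomputable def sup (ψ₁ ψ₂ : CMap X) : CMap X where
  toFun x := max (ψ₁.toFun x) (ψ₂.toFun x)
  continuous' := ψ₁.continuous'.max ψ₂.continuous'
  antitone' := fun _ _ h => max_le_max (ψ₁.antitone' h) (ψ₂.antitone' h)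

/-- Truncated subtraction in `[0,1]`. -/
noncomputable def tsubI (a u : I) : I :=
  ⟨max ((a : ℝ) - u) 0, ⟨le_max_right _ _,
    max_le (by linarith [a.2.2, u.2.1]) zero_le_one⟩⟩

/-- Pointwise truncated subtraction `ψ ⊖ u`. -/
noncomputable def tsub (ψ : CMap X) (u : I) : CMap X where
  toFun x := tsubI (ψ.toFun x) u
  continuous' := by
    apply Continuous.subtype_mk
    exact ((continuous_subtype_val.comp ψ.continuous').sub continuous_const).max continuous_const
  antitone' := fun a b h =>
    Subtype.mk_le_mk.mpr
      (max_le_max (sub_le_sub_right (Subtype.coe_le_coe.2 (ψ.antitone' h)) _) le_rfl)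

end CMap


section Conditions

variable {X : Type*} [TopologicalSpace X] [Preorder X]

/-- `(Mon)`: `Φ` is monotone. -/
def Mon (Φ : CMap X → I) : Prop :=
  ∀ ψ₁ ψ₂ : CMap X, (∀ x, ψ₁.toFun x ≤ ψ₂.toFun x) → Φ ψ₁ ≤ Φ ψ₂

/-- `(Act)`: `Φ(u ⊗ ψ) = u ⊗ Φ(ψ)`. -/
def Act (T : ContinuousTNorm) (Φ : CMap X → I) : Prop :=
  ∀ (u : I) (ψ : CMap X), Φ (CMap.smul T u ψ) = T.mul u (Φ ψ)

/-- `(Sup)`: `Φ(ψ₁ ∨ ψ₂) = Φ(ψ₁) ∨ Φ(ψ₂)`. -/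
def SupC (Φ : CMap X → I) : Prop :=
  ∀ ψ₁ ψ₂ : CMap X, Φ (ψ₁.sup ψ₂) = max (Φ ψ₁) (Φ ψ₂)

/-- `(Ten)lax`: `Φ(ψ₁ ⊗ ψ₂) ≤ Φ(ψ₁) ⊗ Φ(ψ₂)`. -/
def TenLax (T : ContinuousTNorm) (Φ : CMap X → I) : Prop :=
  ∀ ψ₁ ψ₂ : CMap X, Φ (CMap.tens T ψ₁ ψ₂) ≤ T.mul (Φ ψ₁) (Φ ψ₂)

/-- `(Ten)`: `Φ(ψ₁ ⊗ ψ₂) = Φ(ψ₁) ⊗ Φ(ψ₂)`. -/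
def TenC (T : ContinuousTNorm) (Φ : CMap X → I) : Prop :=
  ∀ ψ₁ ψ₂ : CMap X, Φ (CMap.tens T ψ₁ ψ₂) = T.mul (Φ ψ₁) (Φ ψ₂)

/-- `(Top)`: `Φ(1) = 1`. -/
def TopC (Φ : CMap X → I) : Prop := Φ CMap.one = 1

/-- `(Min)`: `Φ(ψ ⊖ u) = Φ(ψ) ⊖ u`. -/
noncomputable def MinC (Φ : CMap X → I) : Prop :=
  ∀ (u : I) (ψ : CMap X), Φ (ψ.tsub u) = CMap.tsubI (Φ ψ) u

/-- Condition `(A)`. -/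
def CondA (Φ : CMap X → I) : Prop :=
  ∀ (x : X) (ψ : CMap X), Φ ψ = 0 → 0 < ψ.toFun x →
    ∃ ψ' : CMap X, ψ'.toFun x = 1 ∧ Φ ψ' = 0

/-- `Zero(Φ) = ⋂ {Zero ψ | Φ ψ = 0}`. -/
def ZeroPhi (Φ : CMap X → I) : Set X := {x | ∀ ψ : CMap X, Φ ψ = 0 → ψ.toFun x = 0}

/-- `Anti(Φ)`. -/
def AntiPhi (Φ : CMap X → I) : Set X := {x | ∀ ψ : CMap X, ψ.toFun x ≤ Φ ψ}

/-- `Φ_A(ψ) = sup_{x ∈ A} ψ(x)`, with `Φ_∅ = 0`. -/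
noncomputable def PhiA (A : Set X) (ψ : CMap X) : I :=
  ⟨sSup ((fun x => (ψ.toFun x : ℝ)) '' A),
   ⟨Real.sSup_nonneg (by rintro r ⟨x, _, rfl⟩; exact (ψ.toFun x).2.1),
    Real.sSup_le (by rintro r ⟨x, _, rfl⟩; exact (ψ.toFun x).2.2) zero_le_one⟩⟩

end Conditions



namespace ContinuousTNorm
variable (T : ContinuousTNorm)

lemma mul_one' (x : I) : T.mul x 1 = x := by rw [T.comm]; exact T.one_mul' x

lemma mul_le_left (x y : I) : T.mul x y ≤ x := by
  have := T.mono (le_refl x) (show y ≤ 1 by exact_mod_cast y.2.2)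
  rwa [T.mul_one'] at this

lemma mul_le_right (x y : I) : T.mul x y ≤ y := by rw [T.comm]; exact T.mul_le_left y x

lemma mul_zero' (x : I) : T.mul x 0 = 0 := le_antisymm (T.mul_le_right x 0) (show (0:I) ≤ T.mul x 0 by exact_mod_cast (T.mul x 0).2.1)

lemma zero_mul' (x : I) : T.mul 0 x = 0 := by rw [T.comm]; exact T.mul_zero' x

lemma continuous_mul_left (u : I) : Continuous fun w => T.mul u w :=
  T.continuous.comp (continuous_const.prodMk continuous_id)

/-- Divisibility: if `y ≤ x` then `y = x ⊗ z` for some `z`. -/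
lemma divisible {x y : I} (h : y ≤ x) : ∃ z : I, T.mul x z = y := by
  have hc : ContinuousOn (fun r : ℝ => ((T.mul x (projIcc 0 1 zero_le_one r) : I) : ℝ))
      (Icc (0:ℝ) 1) :=
    (continuous_subtype_val.comp ((T.continuous_mul_left x).comp continuous_projIcc)).continuousOn
  have h0 : (fun r : ℝ => ((T.mul x (projIcc 0 1 zero_le_one r) : I) : ℝ)) 0 = 0 := by
    simp [T.mul_zero']
  have h1 : (fun r : ℝ => ((T.mul x (projIcc 0 1 zero_le_one r) : I) : ℝ)) 1 = x := by
    simp [T.mul_one']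
  have hy : (y : ℝ) ∈ Icc ((fun r : ℝ => ((T.mul x (projIcc 0 1 zero_le_one r) : I) : ℝ)) 0)
      ((fun r : ℝ => ((T.mul x (projIcc 0 1 zero_le_one r) : I) : ℝ)) 1) := by
    rw [h0, h1]; exact ⟨y.2.1, h⟩
  obtain ⟨r, hr, hfr⟩ := intermediate_value_Icc zero_le_one hc hy
  exact ⟨projIcc 0 1 zero_le_one r, Subtype.ext hfr⟩

/-- Idempotents act as `min`. -/
lemma idem_mul {p x : I} (hp : T.mul p p = p) (h : x ≤ p) : T.mul p x = x := by
  obtain ⟨z, hz⟩ := T.divisible h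
  calc T.mul p x = T.mul p (T.mul p z) := by rw [hz]
    _ = T.mul (T.mul p p) z := (T.assoc p p z).symm
    _ = x := by rw [hp, hz]

end ContinuousTNorm



set_option linter.unusedSectionVars false


section OrderTop
variable {X : Type*} [TopologicalSpace X] [CompactSpace X] [PartialOrder X]

lemma t2_of_closed_le (hle : IsClosed {p : X × X | p.1 ≤ p.2}) : T2Space X := by
  rw [t2_iff_isClosed_diagonal]
  have h2 : IsClosed {p : X × X | p.2 ≤ p.1} :=
    hle.preimage (continuous_snd.prodMk continuous_fst)
  have : diagonal X = {p : X × X | p.1 ≤ p.2} ∩ {p : X × X | p.2 ≤ p.1} := by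
    ext ⟨a, b⟩
    simp only [mem_diagonal_iff, mem_inter_iff, mem_setOf_eq]
    exact ⟨fun h => ⟨h.le, h.ge⟩, fun ⟨h1, h2⟩ => le_antisymm h1 h2⟩
  rw [this]; exact hle.inter h2

lemma isClosed_upClosure (hle : IsClosed {p : X × X | p.1 ≤ p.2}) {K : Set X}
    (hK : IsClosed K) : IsClosed {x | ∃ k ∈ K, k ≤ x} := by
  haveI := t2_of_closed_le hle
  have hT : IsClosed {p : X × X | p.1 ∈ K ∧ p.1 ≤ p.2} :=
    (hK.preimage continuous_fst).inter hle
  have hcomp : IsCompact {p : X × X | p.1 ∈ K ∧ p.1 ≤ p.2} := hT.isCompact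
  have : {x | ∃ k ∈ K, k ≤ x} = Prod.snd '' {p : X × X | p.1 ∈ K ∧ p.1 ≤ p.2} := by
    ext x; constructor
    · rintro ⟨k, hk, hkx⟩; exact ⟨(k, x), ⟨hk, hkx⟩, rfl⟩
    · rintro ⟨⟨a, b⟩, ⟨ha, hab⟩, rfl⟩; exact ⟨a, ha, hab⟩
  rw [this]
  exact (hcomp.image continuous_snd).isClosed

lemma isClosed_downClosure (hle : IsClosed {p : X × X | p.1 ≤ p.2}) {K : Set X}
    (hK : IsClosed K) : IsClosed {x | ∃ k ∈ K, x ≤ k} := by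
  haveI := t2_of_closed_le hle
  have hT : IsClosed {p : X × X | p.2 ∈ K ∧ p.1 ≤ p.2} :=
    (hK.preimage continuous_snd).inter hle
  have : {x | ∃ k ∈ K, x ≤ k} = Prod.fst '' {p : X × X | p.2 ∈ K ∧ p.1 ≤ p.2} := by
    ext x; constructor
    · rintro ⟨k, hk, hkx⟩; exact ⟨(x, k), ⟨hk, hkx⟩, rfl⟩
    · rintro ⟨⟨a, b⟩, ⟨hb, hab⟩, rfl⟩; exact ⟨b, hb, hab⟩
  rw [this]
  exact (hT.isCompact.image continuous_fst).isClosed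

/-- The splitting (order-normality) lemma: disjoint closed upper `A` and closed lower `B`
can be split by a closed upper `C` and closed lower `D` covering `X`. -/
lemma split_exists (hle : IsClosed {p : X × X | p.1 ≤ p.2}) {A B : Set X}
    (hA : IsClosed A) (hAu : IsUpperSet A) (hB : IsClosed B) (hBl : IsLowerSet B)
    (hAB : A ∩ B = ∅) :
    ∃ C D : Set X, IsClosed C ∧ IsUpperSet C ∧ IsClosed D ∧ IsLowerSet D ∧
      C ∪ D = univ ∧ C ∩ B = ∅ ∧ D ∩ A = ∅ := by
  haveI := t2_of_closed_le hle
  have hN : IsOpen {p : X × X | ¬ p.1 ≤ p.2} := hle.isOpen_compl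
  have hsub : A ×ˢ B ⊆ {p : X × X | ¬ p.1 ≤ p.2} := by
    rintro ⟨a, b⟩ ⟨ha, hb⟩ hab
    have : a ∈ A ∩ B := ⟨ha, hBl hab hb⟩
    rw [hAB] at this; exact absurd this (notMem_empty a)
  obtain ⟨U, V, hU, hV, hAU, hBV, hUV⟩ :=
    generalized_tube_lemma hA.isCompact hB.isCompact hN hsub
  refine ⟨{x | ∃ k ∈ Vᶜ, k ≤ x}, {x | ∃ k ∈ Uᶜ, x ≤ k},
    isClosed_upClosure hle hV.isClosed_compl, ?_,
    isClosed_downClosure hle hU.isClosed_compl, ?_, ?_, ?_, ?_⟩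
  · intro x y hxy ⟨k, hk, hkx⟩; exact ⟨k, hk, hkx.trans hxy⟩
  · intro x y hyx ⟨k, hk, hkx⟩; exact ⟨k, hk, hyx.trans hkx⟩
  · ext x
    simp only [mem_union, mem_setOf_eq, mem_univ, iff_true]
    by_cases hxV : x ∈ V
    · refine Or.inr ⟨x, ?_, le_refl x⟩
      intro hxU
      exact hUV (show (x,x) ∈ U ×ˢ V from ⟨hxU, hxV⟩) (le_refl x)
    · exact Or.inl ⟨x, hxV, le_refl x⟩
  · ext x
    simp only [mem_inter_iff, mem_setOf_eq, mem_empty_iff_false, iff_false, not_and]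
    rintro ⟨k, hk, hkx⟩ hxB
    exact hk (hBV (hBl hkx hxB))
  · ext x
    simp only [mem_inter_iff, mem_setOf_eq, mem_empty_iff_false, iff_false, not_and]
    rintro ⟨k, hk, hxk⟩ hxA
    exact hk (hAU (hAu hxk hxA))







/-- Invariant for a pair (closed upper, closed lower, disjoint). -/
def PairInv (p : Set X × Set X) : Prop :=
  IsClosed p.1 ∧ IsUpperSet p.1 ∧ IsClosed p.2 ∧ IsLowerSet p.2 ∧ p.1 ∩ p.2 = ∅

lemma split_total (hle : IsClosed {p : X × X | p.1 ≤ p.2}) (p : Set X × Set X) :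
    ∃ C D : Set X, PairInv p → (IsClosed C ∧ IsUpperSet C ∧ IsClosed D ∧ IsLowerSet D ∧
      C ∪ D = univ ∧ C ∩ p.2 = ∅ ∧ D ∩ p.1 = ∅) := by
  by_cases h : PairInv p
  · obtain ⟨C, D, hs⟩ := split_exists hle h.1 h.2.1 h.2.2.1 h.2.2.2.1 h.2.2.2.2
    exact ⟨C, D, fun _ => hs⟩
  · exact ⟨univ, univ, fun h' => absurd h' h⟩

noncomputable def splitP (hle : IsClosed {p : X × X | p.1 ≤ p.2}) (p : Set X × Set X) :
    Set X × Set X :=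
  ⟨(split_total hle p).choose, (split_total hle p).choose_spec.choose⟩

lemma splitP_spec (hle : IsClosed {p : X × X | p.1 ≤ p.2}) {p : Set X × Set X}
    (h : PairInv p) :
    IsClosed (splitP hle p).1 ∧ IsUpperSet (splitP hle p).1 ∧ IsClosed (splitP hle p).2 ∧
      IsLowerSet (splitP hle p).2 ∧ (splitP hle p).1 ∪ (splitP hle p).2 = univ ∧
      (splitP hle p).1 ∩ p.2 = ∅ ∧ (splitP hle p).2 ∩ p.1 = ∅ :=
  (split_total hle p).choose_spec.choose_spec h

/-- The dyadic tree of sets, level `n`, index `k ∈ [1, 2^n]`. -/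
noncomputable def Ltree (hle : IsClosed {p : X × X | p.1 ≤ p.2}) (A B : Set X) :
    ℕ → ℕ → Set X × Set X
  | 0, _ => (A, B)
  | (n+1), k =>
    if k % 2 = 1 then
      ((splitP hle (Ltree hle A B n ((k+1)/2))).1, (Ltree hle A B n ((k+1)/2)).2)
    else
      ((Ltree hle A B n ((k+1)/2)).1, (splitP hle (Ltree hle A B n ((k+1)/2))).2)

variable (hle : IsClosed {p : X × X | p.1 ≤ p.2}) (A B : Set X)

lemma Ltree_zero (k : ℕ) : Ltree hle A B 0 k = (A, B) := rfl

lemma Ltree_odd (n j : ℕ) (hj : 1 ≤ j) :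
    Ltree hle A B (n+1) (2*j-1) =
      ((splitP hle (Ltree hle A B n j)).1, (Ltree hle A B n j).2) := by
  have h1 : (2*j-1) % 2 = 1 := by omega
  have h2 : (2*j-1+1)/2 = j := by omega
  rw [Ltree, h2, if_pos h1]

lemma Ltree_even (n j : ℕ) :
    Ltree hle A B (n+1) (2*j) =
      ((Ltree hle A B n j).1, (splitP hle (Ltree hle A B n j)).2) := by
  have h1 : ¬ (2*j) % 2 = 1 := by omega
  have h2 : (2*j+1)/2 = j := by omega
  rw [Ltree, h2, if_neg h1]

variable (hroot : PairInv (A, B))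
include hroot

lemma Ltree_inv : ∀ n k, 1 ≤ k → k ≤ 2^n → PairInv (Ltree hle A B n k) := by
  intro n
  induction n with
  | zero => intro k _ _; rw [Ltree_zero]; exact hroot
  | succ n ih =>
    intro k hk1 hk2
    have hp : 2^(n+1) = 2*2^n := by rw [pow_succ]; ring
    rcases Nat.even_or_odd k with he | ho
    · obtain ⟨j, rfl⟩ := he
      rw [show j+j = 2*j from by ring] at hk1 hk2 ⊢
      have hinv := ih j (by omega) (by omega)
      have hs := splitP_spec hle hinv
      rw [Ltree_even]
      refine ⟨hinv.1, hinv.2.1, hs.2.2.1, hs.2.2.2.1, ?_⟩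
      rw [inter_comm]; exact hs.2.2.2.2.2.2
    · obtain ⟨j, rfl⟩ := ho
      have hinv := ih (j+1) (by omega) (by omega)
      have hs := splitP_spec hle hinv
      rw [show 2*j+1 = 2*(j+1)-1 from by omega, Ltree_odd hle A B n (j+1) (by omega)]
      exact ⟨hs.1, hs.2.1, hinv.2.2.1, hinv.2.2.2.1, hs.2.2.2.2.2.1⟩

/-- consecutive union property -/
lemma Ltree_union : ∀ n k, 1 ≤ k → k + 1 ≤ 2^n →
    (Ltree hle A B n k).1 ∪ (Ltree hle A B n (k+1)).2 = univ := by
  intro n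
  induction n with
  | zero => intro k h1 h2; simp at h2; omega
  | succ n ih =>
    intro k hk1 hk2
    have hp : 2^(n+1) = 2*2^n := by rw [pow_succ]; ring
    rcases Nat.even_or_odd k with he | ho
    · obtain ⟨j, rfl⟩ := he
      rw [show j+j = 2*j from by ring] at hk1 hk2 ⊢
      have hj1 : 1 ≤ j := by omega
      have hj2 : j + 1 ≤ 2^n := by omega
      rw [Ltree_even, show 2*j+1 = 2*(j+1)-1 from by omega,
        Ltree_odd hle A B n (j+1) (by omega)]
      exact ih j hj1 hj2
    · obtain ⟨j, rfl⟩ := ho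
      have hinv := Ltree_inv hle A B hroot n (j+1) (by omega) (by omega)
      have hs := splitP_spec hle hinv
      rw [show 2*j+1 = 2*(j+1)-1 from by omega, Ltree_odd hle A B n (j+1) (by omega),
        show 2*(j+1)-1+1 = 2*(j+1) from by omega, Ltree_even]
      exact hs.2.2.2.2.1

/-- consecutive antitonicity -/
lemma Ltree_antitone_consec : ∀ n k, 1 ≤ k → k + 1 ≤ 2^n →
    (Ltree hle A B n (k+1)).1 ⊆ (Ltree hle A B n k).1 := by
  intro n
  induction n with
  | zero => intro k h1 h2; simp at h2; omega
  | succ n ih =>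
    intro k hk1 hk2
    have hp : 2^(n+1) = 2*2^n := by rw [pow_succ]; ring
    rcases Nat.even_or_odd k with he | ho
    · obtain ⟨j, rfl⟩ := he
      rw [show j+j = 2*j from by ring] at hk1 hk2 ⊢
      have hj1 : 1 ≤ j := by omega
      have hj2 : j + 1 ≤ 2^n := by omega
      have hinv := Ltree_inv hle A B hroot n (j+1) (by omega) hj2
      have hs := splitP_spec hle hinv
      rw [Ltree_even, show 2*j+1 = 2*(j+1)-1 from by omega,
        Ltree_odd hle A B n (j+1) (by omega)]
      intro x hx
      have hU := Ltree_union hle A B hroot n j hj1 hj2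
      have hx2 : x ∉ (Ltree hle A B n (j+1)).2 := by
        intro hx2
        have hmem : x ∈ (splitP hle (Ltree hle A B n (j+1))).1 ∩ (Ltree hle A B n (j+1)).2 :=
          ⟨hx, hx2⟩
        rw [hs.2.2.2.2.2.1] at hmem
        exact hmem
      have := (mem_union x _ _).mp (hU ▸ mem_univ x)
      tauto
    · obtain ⟨j, rfl⟩ := ho
      have hinv := Ltree_inv hle A B hroot n (j+1) (by omega) (by omega)
      have hs := splitP_spec hle hinv
      rw [show 2*j+1 = 2*(j+1)-1 from by omega, Ltree_odd hle A B n (j+1) (by omega),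
        show 2*(j+1)-1+1 = 2*(j+1) from by omega, Ltree_even]
      intro x hx
      have hcup := hs.2.2.2.2.1
      have hDA := hs.2.2.2.2.2.2
      have hmem : x ∈ (splitP hle (Ltree hle A B n (j+1))).1 ∪
          (splitP hle (Ltree hle A B n (j+1))).2 := hcup ▸ mem_univ x
      rcases hmem with h | h
      · exact h
      · exfalso
        have hmem2 : x ∈ (splitP hle (Ltree hle A B n (j+1))).2 ∩ (Ltree hle A B n (j+1)).1 :=
          ⟨h, hx⟩
        rw [hDA] at hmem2
        exact hmem2

lemma Ltree_antitone : ∀ n j k, 1 ≤ j → j ≤ k → k ≤ 2^n →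
    (Ltree hle A B n k).1 ⊆ (Ltree hle A B n j).1 := by
  intro n j k hj hjk hk
  induction k, hjk using Nat.le_induction with
  | base => exact subset_rfl
  | succ k hk' ih =>
    intro x hx
    exact ih (by omega) (Ltree_antitone_consec hle A B hroot n k (by omega) (by omega) hx)

omit hroot in
lemma Ltree_top : ∀ n, (Ltree hle A B n (2^n)).1 = A := by
  intro n
  induction n with
  | zero => rfl
  | succ n ih =>
    rw [show 2^(n+1) = 2*2^n from by rw [pow_succ]; ring, Ltree_even]
    exact ih

omit hroot in
lemma Ltree_bot : ∀ n, (Ltree hle A B n 1).2 = B := by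
  intro n
  induction n with
  | zero => rfl
  | succ n ih =>
    rw [show 1 = 2*1-1 from by omega, Ltree_odd hle A B n 1 le_rfl]
    simpa using ih

omit hroot in
lemma Ltree_liftC : ∀ n k m, (Ltree hle A B (n+m) (k * 2^m)).1 = (Ltree hle A B n k).1 := by
  intro n k m
  induction m with
  | zero => simp
  | succ m ih =>
    have h1 : k * 2^(m+1) = 2*(k*2^m) := by rw [pow_succ]; ring
    have h2 : n + (m+1) = (n+m) + 1 := by omega
    rw [h1, h2, Ltree_even]
    exact ih

omit hroot in
lemma Ltree_liftB : ∀ n k m, 1 ≤ k →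
    (Ltree hle A B (n+m) ((k-1) * 2^m + 1)).2 = (Ltree hle A B n k).2 := by
  intro n k m hk
  induction m with
  | zero => simp; rw [show k - 1 + 1 = k from by omega]
  | succ m ih =>
    have e : (k-1) * 2^(m+1) = 2*((k-1)*2^m) := by rw [pow_succ]; ring
    have h1 : (k-1) * 2^(m+1) + 1 = 2*((k-1)*2^m + 1) - 1 := by omega
    have h2 : n + (m+1) = (n+m) + 1 := by omega
    rw [h1, h2, Ltree_odd hle A B (n+m) _ (by omega)]
    exact ih

end OrderTop
section Dyadic

lemma exists_dyadic {a b : ℝ} (ha : 0 ≤ a) (hb : b ≤ 1) (h : a < b) :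
    ∃ n k : ℕ, 1 ≤ k ∧ k ≤ 2^n ∧ a < (k:ℝ)/2^n ∧ (k:ℝ)/2^n < b := by
  obtain ⟨n, hn⟩ := exists_pow_lt_of_lt_one (sub_pos.mpr h) (by norm_num : (1:ℝ)/2 < 1)
  have hn' : (1:ℝ)/2^n < b - a := by rwa [div_pow, one_pow] at hn
  have hpow : (0:ℝ) < 2^n := by positivity
  rw [div_lt_iff₀ hpow] at hn'
  set k : ℕ := (⌊a * 2^n⌋).toNat + 1 with hkdef
  have hfl : (0:ℤ) ≤ ⌊a * 2^n⌋ := Int.floor_nonneg.mpr (by positivity)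
  have htn : ((⌊a * 2^n⌋.toNat : ℕ) : ℝ) = ((⌊a * 2^n⌋ : ℤ) : ℝ) := by
    exact_mod_cast Int.toNat_of_nonneg hfl
  have hcast : ((k : ℕ) : ℝ) = ((⌊a * 2^n⌋ : ℤ) : ℝ) + 1 := by
    rw [hkdef]; push_cast [htn]; ring
  have hlt : a < (k:ℝ)/2^n := by
    rw [lt_div_iff₀ hpow, hcast]
    linarith [Int.lt_floor_add_one (a*2^n)]
  have hexp : (b-a)*2^n = b*2^n - a*2^n := by ring
  have hlt2 : (k:ℝ)/2^n < b := by
    rw [div_lt_iff₀ hpow, hcast]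
    linarith [Int.floor_le (a*2^n)]
  have hk2 : k ≤ 2^n := by
    have h2 : (k:ℝ) < 2^n := (div_lt_one hpow).mp (lt_of_lt_of_le hlt2 hb)
    have h3 : k < 2^n := by exact_mod_cast h2
    omega
  exact ⟨n, k, by omega, hk2, hlt, hlt2⟩

lemma dyadic_lt_iff {n m k k' : ℕ} : (k:ℝ)/2^n < (k':ℝ)/2^m ↔ k * 2^m < k' * 2^n := by
  rw [div_lt_div_iff₀ (by positivity) (by positivity)]
  constructor <;> intro h <;> exact_mod_cast h

end Dyadic

section Urysohn
variable {X : Type*} [TopologicalSpace X] [CompactSpace X] [PartialOrder X]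
variable (hle : IsClosed {p : X × X | p.1 ≤ p.2}) (A B : Set X)

/-- The dyadic values witnessed at `x`. -/
def EfS (x : X) : Set ℝ :=
  {q | ∃ n k : ℕ, 1 ≤ k ∧ k ≤ 2^n ∧ q = (k:ℝ)/2^n ∧ x ∈ (Ltree hle A B n k).1}

noncomputable def fU (x : X) : ℝ := sSup (insert 0 (EfS hle A B x))

lemma EfS_le_one {x : X} {q : ℝ} (hq : q ∈ EfS hle A B x) : q ≤ 1 := by
  obtain ⟨n, k, hk1, hk2, rfl, _⟩ := hq
  rw [div_le_one (by positivity)]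
  exact_mod_cast hk2

lemma EfS_bdd (x : X) : BddAbove (insert 0 (EfS hle A B x)) := by
  refine ⟨1, ?_⟩
  rintro q (rfl | hq)
  · norm_num
  · exact EfS_le_one hle A B hq

lemma fU_nonneg (x : X) : 0 ≤ fU hle A B x :=
  le_csSup (EfS_bdd hle A B x) (mem_insert 0 _)

lemma fU_le_one (x : X) : fU hle A B x ≤ 1 := by
  apply Real.sSup_le _ zero_le_one
  rintro q (rfl | hq)
  · norm_num
  · exact EfS_le_one hle A B hq

lemma fU_ge {x : X} {n k : ℕ} (hk1 : 1 ≤ k) (hk2 : k ≤ 2^n)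
    (hx : x ∈ (Ltree hle A B n k).1) : (k:ℝ)/2^n ≤ fU hle A B x :=
  le_csSup (EfS_bdd hle A B x) (mem_insert_of_mem _ ⟨n, k, hk1, hk2, rfl, hx⟩)

variable (hroot : PairInv (A, B))
include hroot

lemma fU_le {x : X} {n k : ℕ} (hk1 : 1 ≤ k) (hk2 : k ≤ 2^n)
    (hx : x ∉ (Ltree hle A B n k).1) : fU hle A B x ≤ (k:ℝ)/2^n := by
  apply Real.sSup_le
  · rintro q (rfl | ⟨m, k', hk1', hk2', rfl, hx'⟩)
    · positivity
    · by_contra hgt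
      push_neg at hgt
      have hcr : k * 2^m < k' * 2^n := dyadic_lt_iff.mp hgt
      have e1 : (Ltree hle A B m k').1 = (Ltree hle A B (n+m) (k' * 2^n)).1 := by
        rw [add_comm n m]; exact (Ltree_liftC hle A B m k' n).symm
      have e2 : (Ltree hle A B n k).1 = (Ltree hle A B (n+m) (k * 2^m)).1 :=
        (Ltree_liftC hle A B n k m).symm
      apply hx
      rw [e2]
      have hpos : 1 ≤ k * 2^m := Nat.mul_pos hk1 (Nat.two_pow_pos m)
      refine Ltree_antitone hle A B hroot (n+m) (k*2^m) (k'*2^n)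
        hpos (le_of_lt hcr) ?_ (e1 ▸ hx')
      calc k' * 2^n ≤ 2^m * 2^n := Nat.mul_le_mul_right _ hk2'
        _ = 2^(n+m) := by rw [← pow_add, add_comm]
  · positivity

/-- if `y` is outside the `B`-component of node `(m, j+1)` then `fU y ≥ j/2^m`. -/
lemma fU_ge_of_notB {y : X} {m j : ℕ} (hj1 : 1 ≤ j) (hj2 : j + 1 ≤ 2^m)
    (hy : y ∉ (Ltree hle A B m (j+1)).2) : (j:ℝ)/2^m ≤ fU hle A B y := by
  have hU := Ltree_union hle A B hroot m j hj1 hj2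
  have : y ∈ (Ltree hle A B m j).1 := by
    have := (mem_union y _ _).mp (hU ▸ mem_univ y)
    tauto
  exact fU_ge hle A B hj1 (by omega) this

/-- membership in `(Ltree n k).1` excludes the `B`-component of any strictly smaller node. -/
lemma notB_of_mem {x : X} {n k m j : ℕ} (hk1 : 1 ≤ k) (hk2 : k ≤ 2^n)
    (hj1 : 1 ≤ j) (hj2 : j + 1 ≤ 2^m)
    (hlt : (j:ℝ)/2^m < (k:ℝ)/2^n) (hx : x ∈ (Ltree hle A B n k).1) :
    x ∉ (Ltree hle A B m (j+1)).2 := by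
  intro hx2
  have hcr : j * 2^n < k * 2^m := dyadic_lt_iff.mp hlt
  have hrange : k * 2^m ≤ 2^(n+m) := by
    calc k * 2^m ≤ 2^n * 2^m := Nat.mul_le_mul_right _ hk2
      _ = 2^(n+m) := (pow_add 2 n m).symm
  have e1 : (Ltree hle A B n k).1 = (Ltree hle A B (n+m) (k * 2^m)).1 :=
    (Ltree_liftC hle A B n k m).symm
  have e2 : (Ltree hle A B m (j+1)).2 = (Ltree hle A B (n+m) (j * 2^n + 1)).2 := by
    have := Ltree_liftB hle A B m (j+1) n (by omega)
    rw [add_comm n m]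
    rw [← this, show j + 1 - 1 = j from rfl]
  have hxA : x ∈ (Ltree hle A B (n+m) (j * 2^n + 1)).1 := by
    refine Ltree_antitone hle A B hroot (n+m) (j*2^n+1) (k*2^m) (by omega) (by omega)
      hrange ?_
    rw [← e1]; exact hx
  have hinv := Ltree_inv hle A B hroot (n+m) (j*2^n+1) (by omega) (by omega)
  have : x ∈ (Ltree hle A B (n+m) (j*2^n+1)).1 ∩ (Ltree hle A B (n+m) (j*2^n+1)).2 :=
    ⟨hxA, e2 ▸ hx2⟩
  rw [hinv.2.2.2.2] at this
  exact this

lemma fU_monotone : Monotone (fU hle A B) := by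
  intro x y hxy
  apply csSup_le_csSup (EfS_bdd hle A B y) (insert_nonempty _ _)
  rintro q (rfl | ⟨n, k, hk1, hk2, rfl, hx⟩)
  · exact mem_insert 0 _
  · exact mem_insert_of_mem _
      ⟨n, k, hk1, hk2, rfl, (Ltree_inv hle A B hroot n k hk1 hk2).2.1 hxy hx⟩

lemma fU_eq_one_on_A {x : X} (hx : x ∈ A) : fU hle A B x = 1 := by
  refine le_antisymm (fU_le_one hle A B x) ?_
  have h := fU_ge hle A B (n := 0) (k := 1) le_rfl (by norm_num) (by
    rw [show (Ltree hle A B 0 1).1 = A from rfl]; exact hx)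
  simpa using h

lemma fU_eq_zero_on_B {x : X} (hx : x ∈ B) : fU hle A B x = 0 := by
  refine le_antisymm ?_ (fU_nonneg hle A B x)
  apply Real.sSup_le _ le_rfl
  rintro q (rfl | ⟨n, k, hk1, hk2, rfl, hxk⟩)
  · exact le_rfl
  · exfalso
    have hx1 : x ∈ (Ltree hle A B n 1).1 :=
      Ltree_antitone hle A B hroot n 1 k le_rfl hk1 hk2 hxk
    have hx2 : x ∈ (Ltree hle A B n 1).2 := by rw [Ltree_bot]; exact hx
    have hinv := Ltree_inv hle A B hroot n 1 le_rfl Nat.one_le_two_pow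
    have : x ∈ (Ltree hle A B n 1).1 ∩ (Ltree hle A B n 1).2 := ⟨hx1, hx2⟩
    rw [hinv.2.2.2.2] at this
    exact this

lemma fU_continuous : Continuous (fU hle A B) := by
  rw [continuous_iff_continuousAt]
  intro x
  rw [ContinuousAt, Metric.tendsto_nhds]
  intro ε hε
  have hside1 : ∃ V, IsOpen V ∧ x ∈ V ∧ ∀ y ∈ V, fU hle A B y < fU hle A B x + ε := by
    by_cases hcase : fU hle A B x + ε > 1
    · exact ⟨univ, isOpen_univ, mem_univ x, fun y _ =>
        lt_of_le_of_lt (fU_le_one hle A B y) hcase⟩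
    · push_neg at hcase
      obtain ⟨n, k, hk1, hk2, hr1, hr2⟩ :=
        exists_dyadic (fU_nonneg hle A B x) hcase (by linarith)
      have hxk : x ∉ (Ltree hle A B n k).1 := fun hmem =>
        absurd (fU_ge hle A B hk1 hk2 hmem) (by linarith)
      refine ⟨((Ltree hle A B n k).1)ᶜ,
        (Ltree_inv hle A B hroot n k hk1 hk2).1.isOpen_compl, hxk, ?_⟩
      intro y hy
      exact lt_of_le_of_lt (fU_le hle A B hroot hk1 hk2 hy) hr2
  have hside2 : ∃ V, IsOpen V ∧ x ∈ V ∧ ∀ y ∈ V, fU hle A B x - ε < fU hle A B y := by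
    by_cases hcase : fU hle A B x - ε < 0
    · exact ⟨univ, isOpen_univ, mem_univ x, fun y _ =>
        lt_of_lt_of_le hcase (fU_nonneg hle A B y)⟩
    · push_neg at hcase
      have hlt : fU hle A B x - ε < fU hle A B x := by linarith
      obtain ⟨q, hq, hq2⟩ := exists_lt_of_lt_csSup (insert_nonempty _ _) hlt
      rcases hq with rfl | ⟨n, k, hk1, hk2, rfl, hxk⟩
      · linarith
      · obtain ⟨m, j, hj1, hj2, hv1, hv2⟩ :=
          exists_dyadic hcase (EfS_le_one hle A B ⟨n, k, hk1, hk2, rfl, hxk⟩) hq2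
        have hj2' : j + 1 ≤ 2^m := by
          have : (j:ℝ)/2^m < 1 := lt_of_lt_of_le hv2 (by
            rw [div_le_one (by positivity : (0:ℝ) < 2^n)]
            exact_mod_cast hk2)
          rw [div_lt_one (by positivity)] at this
          have : j < 2^m := by exact_mod_cast this
          omega
        have hnotB := notB_of_mem hle A B hroot hk1 hk2 hj1 hj2' hv2 hxk
        refine ⟨((Ltree hle A B m (j+1)).2)ᶜ,
          (Ltree_inv hle A B hroot m (j+1) (by omega) hj2').2.2.1.isOpen_compl, hnotB, ?_⟩
        intro y hy
        exact lt_of_lt_of_le hv1 (fU_ge_of_notB hle A B hroot hj1 hj2' hy)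
  obtain ⟨V1, hV1o, hxV1, hV1⟩ := hside1
  obtain ⟨V2, hV2o, hxV2, hV2⟩ := hside2
  filter_upwards [hV1o.mem_nhds hxV1, hV2o.mem_nhds hxV2] with y h1 h2
  rw [Real.dist_eq, abs_lt]
  constructor
  · linarith [hV2 y h2]
  · linarith [hV1 y h1]

end Urysohn

section Sep
variable {X : Type*} [TopologicalSpace X] [CompactSpace X] [PartialOrder X]

lemma exists_sep_cmap (hle : IsClosed {p : X × X | p.1 ≤ p.2}) {A : Set X}
    (hA : IsClosed A) (hAu : IsUpperSet A) {x₀ : X} (hx₀ : x₀ ∉ A) :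
    ∃ ψ : CMap X, (∀ a ∈ A, ψ.toFun a = 0) ∧ ψ.toFun x₀ = 1 := by
  set B : Set X := {y : X | y ≤ x₀} with hBdef
  have hBc : IsClosed B := hle.preimage (continuous_id.prodMk continuous_const)
  have hBl : IsLowerSet B := fun a b hba ha => le_trans hba ha
  have hdisj : A ∩ B = ∅ := by
    ext a
    simp only [mem_inter_iff, mem_empty_iff_false, iff_false, not_and]
    intro haA haB
    exact hx₀ (hAu haB haA)
  have hroot : PairInv (A, B) := ⟨hA, hAu, hBc, hBl, hdisj⟩
  refine ⟨⟨fun x => ⟨1 - fU hle A B x,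
      ⟨by linarith [fU_le_one hle A B x], by linarith [fU_nonneg hle A B x]⟩⟩, ?_, ?_⟩, ?_, ?_⟩
  · exact Continuous.subtype_mk (continuous_const.sub (fU_continuous hle A B hroot)) _
  · intro x y hxy
    have := fU_monotone hle A B hroot hxy
    exact Subtype.mk_le_mk.mpr (by linarith)
  · intro a ha
    exact Subtype.ext (by simp [fU_eq_one_on_A hle A B hroot ha])
  · exact Subtype.ext (by simp [fU_eq_zero_on_B hle A B hroot (show x₀ ∈ B from le_refl x₀)])

end Sep

section PhiALemmas
variable {X : Type*} [TopologicalSpace X] [CompactSpace X] [PartialOrder X]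

lemma PhiA_le {A : Set X} {ψ : CMap X} {c : I} (h : ∀ x ∈ A, ψ.toFun x ≤ c) :
    PhiA A ψ ≤ c := by
  have : (PhiA A ψ : ℝ) ≤ (c : ℝ) := by
    apply Real.sSup_le _ c.2.1
    rintro r ⟨x, hx, rfl⟩
    exact_mod_cast h x hx
  exact_mod_cast this

lemma le_PhiA {A : Set X} {ψ : CMap X} {x : X} (hx : x ∈ A) : ψ.toFun x ≤ PhiA A ψ := by
  have : (ψ.toFun x : ℝ) ≤ (PhiA A ψ : ℝ) := by
    apply le_csSup ⟨1, ?_⟩ (mem_image_of_mem _ hx)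
    rintro r ⟨y, _, rfl⟩
    exact (ψ.toFun y).2.2
  exact_mod_cast this

lemma PhiA_empty (ψ : CMap X) : PhiA (∅ : Set X) ψ = 0 := by
  apply Subtype.ext
  show sSup _ = _
  rw [image_empty, Real.sSup_empty]
  rfl

lemma PhiA_eq_max {A : Set X} (hA : IsClosed A) (hne : A.Nonempty) (ψ : CMap X) :
    ∃ x₀ ∈ A, PhiA A ψ = ψ.toFun x₀ := by
  obtain ⟨x₀, hx₀, hmax⟩ := hA.isCompact.exists_isMaxOn hne
    ((continuous_subtype_val.comp ψ.continuous').continuousOn)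
  refine ⟨x₀, hx₀, le_antisymm (PhiA_le fun x hx => ?_) (le_PhiA hx₀)⟩
  exact_mod_cast hmax hx

lemma PhiA_mon (A : Set X) : Mon (fun ψ => PhiA A ψ) := by
  intro ψ₁ ψ₂ h
  exact PhiA_le fun x hx => le_trans (h x) (le_PhiA hx)

lemma PhiA_act (T : ContinuousTNorm) {A : Set X} (hA : IsClosed A) :
    Act T (fun ψ => PhiA A ψ) := by
  intro u ψ
  show PhiA A (CMap.smul T u ψ) = T.mul u (PhiA A ψ)
  rcases eq_empty_or_nonempty A with rfl | hne
  · rw [PhiA_empty, PhiA_empty, T.mul_zero']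
  · obtain ⟨x₀, hx₀, hmax⟩ := PhiA_eq_max hA hne ψ
    apply le_antisymm
    · apply PhiA_le
      intro x hx
      show T.mul u (ψ.toFun x) ≤ T.mul u (PhiA A ψ)
      exact T.mono le_rfl (le_PhiA hx)
    · rw [hmax]
      exact le_PhiA (ψ := CMap.smul T u ψ) hx₀
  
lemma PhiA_sup (A : Set X) : SupC (fun ψ => PhiA A ψ) := by
  intro ψ₁ ψ₂
  apply le_antisymm
  · apply PhiA_le
    intro x hx
    exact max_le_max (le_PhiA hx) (le_PhiA hx)
  · apply max_le
    · exact PhiA_mon A ψ₁ (ψ₁.sup ψ₂) (fun x => le_max_left _ _)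
    · exact PhiA_mon A ψ₂ (ψ₁.sup ψ₂) (fun x => le_max_right _ _)

lemma PhiA_tenlax (T : ContinuousTNorm) (A : Set X) : TenLax T (fun ψ => PhiA A ψ) := by
  intro ψ₁ ψ₂
  apply PhiA_le
  intro x hx
  exact T.mono (le_PhiA hx) (le_PhiA hx)

lemma tsubI_mono {a b u : I} (h : a ≤ b) : CMap.tsubI a u ≤ CMap.tsubI b u := by
  apply Subtype.mk_le_mk.mpr
  exact max_le_max (sub_le_sub_right (by exact_mod_cast h) _) le_rfl

lemma PhiA_min {A : Set X} (hA : IsClosed A) : MinC (fun ψ => PhiA A ψ) := by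
  intro u ψ
  show PhiA A (ψ.tsub u) = CMap.tsubI (PhiA A ψ) u
  rcases eq_empty_or_nonempty A with rfl | hne
  · rw [PhiA_empty, PhiA_empty]
    apply Subtype.ext
    show (0:ℝ) = max (0 - (u:ℝ)) 0
    rw [max_eq_right (by linarith [u.2.1])]
  · obtain ⟨x₀, hx₀, hmax⟩ := PhiA_eq_max hA hne ψ
    apply le_antisymm
    · apply PhiA_le
      intro x hx
      exact tsubI_mono (le_PhiA hx)
    · rw [hmax]
      exact le_PhiA (ψ := ψ.tsub u) hx₀

lemma phiA_injOn (hle : IsClosed {p : X × X | p.1 ≤ p.2}) :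
    Set.InjOn (fun A : Set X => fun ψ => PhiA A ψ)
      {A : Set X | IsClosed A ∧ IsUpperSet A} := by
  have key : ∀ A ∈ {A : Set X | IsClosed A ∧ IsUpperSet A},
      ∀ B ∈ {A : Set X | IsClosed A ∧ IsUpperSet A},
      (fun ψ => PhiA A ψ) = (fun ψ => PhiA B ψ) → B ⊆ A := by
    rintro A ⟨hA, hAu⟩ B ⟨hB, hBu⟩ heq x₀ hx₀B
    by_contra hx₀
    obtain ⟨ψ, hψA, hψx₀⟩ := exists_sep_cmap hle hA hAu hx₀
    have h1 : PhiA A ψ = 0 := le_antisymm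
      (PhiA_le fun x hx => le_of_eq (hψA x hx)) (by exact_mod_cast (PhiA A ψ).2.1)
    have heqψ : PhiA A ψ = PhiA B ψ := congrFun heq ψ
    have h2 : ψ.toFun x₀ ≤ PhiA B ψ := le_PhiA hx₀B
    rw [← heqψ, h1] at h2
    have h4 : (ψ.toFun x₀ : ℝ) ≤ ((0:I):ℝ) := Subtype.coe_le_coe.mpr h2
    rw [hψx₀] at h4
    norm_num [Set.Icc.coe_zero, Set.Icc.coe_one] at h4
  intro A hA B hB heq
  exact le_antisymm (key B hB A hA heq.symm) (key A hA B hB heq)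

end PhiALemmas

section Surj
variable {X : Type*} [TopologicalSpace X] [CompactSpace X] [PartialOrder X]
variable (T : ContinuousTNorm)

/-- Composition of a `CMap` with a monotone continuous map `I → I`. -/
def cmapComp (h : I → I) (hc : Continuous h) (hm : Monotone h) (ψ : CMap X) : CMap X :=
  ⟨h ∘ ψ.toFun, hc.comp ψ.continuous', fun _ _ hab => hm (ψ.antitone' hab)⟩

/-- Pointwise minimum with a constant. -/
noncomputable def minConst (ψ : CMap X) (c : I) : CMap X :=
  ⟨fun x => min (ψ.toFun x) c, ψ.continuous'.min continuous_const,
   fun _ _ hab => min_le_min (ψ.antitone' hab) le_rfl⟩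

/-- The clamp map `a ↦ clamp ((a - u)/(d - u))`. -/
noncomputable def hclamp (u d : ℝ) : I → I :=
  fun a => projIcc 0 1 zero_le_one (((a:ℝ) - u)/(d - u))

lemma hclamp_continuous (u d : ℝ) : Continuous (hclamp u d) :=
  continuous_projIcc.comp ((continuous_subtype_val.sub continuous_const).div_const _)

lemma hclamp_monotone {u d : ℝ} (h : u < d) : Monotone (hclamp u d) := by
  intro a b hab
  apply monotone_projIcc
  have hab' : (a:ℝ) ≤ b := hab
  have hd : (0:ℝ) < d - u := by linarith
  gcongr

lemma hclamp_eq_zero {u d : ℝ} (hud : u < d) {a : I} (h : (a:ℝ) ≤ u) : hclamp u d a = 0 := by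
  unfold hclamp
  rw [projIcc_of_le_left]
  · rfl
  · apply div_nonpos_of_nonpos_of_nonneg (by linarith) (by linarith)

lemma hclamp_eq_one {u d : ℝ} (hud : u < d) {a : I} (h : d ≤ (a:ℝ)) : hclamp u d a = 1 := by
  unfold hclamp
  rw [projIcc_of_right_le]
  · rfl
  · rw [le_div_iff₀ (by linarith)]
    linarith

end Surj

section PhiLemmas
variable {X : Type*} [TopologicalSpace X] [CompactSpace X] [PartialOrder X]
variable (T : ContinuousTNorm)

lemma Phi_zero_of_pointwise_zero {Φ : CMap X → I} (hMon : Mon Φ) (hAct : Act T Φ)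
    {ψ : CMap X} (h : ∀ x, ψ.toFun x = 0) : Φ ψ = 0 := by
  have h0 : Φ (CMap.smul T 0 CMap.one) = 0 := by rw [hAct]; exact T.zero_mul' _
  apply le_antisymm
  · rw [← h0]
    apply hMon
    intro x
    show ψ.toFun x ≤ T.mul 0 1
    rw [T.zero_mul', h x]
  · exact (show ((0:I):ℝ) ≤ (Φ ψ : ℝ) from (Φ ψ).2.1) |> Subtype.coe_le_coe.mp

lemma Phi_le_of_pointwise_le {Φ : CMap X → I} (hMon : Mon Φ) (hAct : Act T Φ)
    (hMin : MinC Φ) {ψ : CMap X} {c : I} (h : ∀ x, ψ.toFun x ≤ c) : Φ ψ ≤ c := by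
  have h1 : Φ (ψ.tsub c) = 0 := by
    apply Phi_zero_of_pointwise_zero T hMon hAct
    intro x
    apply Subtype.ext
    show max ((ψ.toFun x : ℝ) - c) 0 = 0
    rw [max_eq_right (by linarith [Subtype.coe_le_coe.mpr (h x)])]
  have h2 := hMin c ψ
  rw [h1] at h2
  have h3 : max ((Φ ψ : ℝ) - c) 0 = 0 := by
    have := congrArg Subtype.val h2.symm
    exact this
  have h4 : (Φ ψ : ℝ) - c ≤ 0 := le_of_le_of_eq (le_max_left _ _) h3
  exact Subtype.coe_le_coe.mp (by linarith)

lemma AntiPhi_isClosed {Φ : CMap X → I} : IsClosed (AntiPhi Φ) := by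
  have heq : AntiPhi Φ = ⋂ ψ : CMap X, {x | (ψ.toFun x : ℝ) ≤ (Φ ψ : ℝ)} := by
    ext x
    simp only [AntiPhi, mem_setOf_eq, mem_iInter]
    exact ⟨fun h ψ => Subtype.coe_le_coe.mpr (h ψ), fun h ψ => Subtype.coe_le_coe.mp (h ψ)⟩
  rw [heq]
  exact isClosed_iInter fun ψ =>
    isClosed_le (continuous_subtype_val.comp ψ.continuous') continuous_const

lemma AntiPhi_isUpperSet {Φ : CMap X → I} : IsUpperSet (AntiPhi Φ) :=
  fun _ _ hxy hx ψ => le_trans (ψ.antitone' hxy) (hx ψ)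

end PhiLemmas

section Steps
variable {X : Type*} [TopologicalSpace X] [CompactSpace X] [PartialOrder X]
variable (T : ContinuousTNorm)

lemma stepA {Φ : CMap X → I} (hMon : Mon Φ) (hAct : Act T Φ) (hSup : SupC Φ)
    (hMin : MinC Φ) {ψ : CMap X} {c : I} (hc : (c:ℝ) < (Φ ψ : ℝ)) (ξ : CMap X)
    (hξ : ∀ y, (c:ℝ) ≤ (ψ.toFun y : ℝ) → ξ.toFun y = 1) : (Φ ψ : ℝ) ≤ (Φ ξ : ℝ) := by
  have hφ₀ : Φ (minConst ψ c) ≤ c :=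
    Phi_le_of_pointwise_le T hMon hAct hMin fun x => min_le_right _ _
  have hpw : ∀ x, ψ.toFun x ≤ ((minConst ψ c).sup ξ).toFun x := by
    intro x
    show ψ.toFun x ≤ max (min (ψ.toFun x) c) (ξ.toFun x)
    by_cases hle : ψ.toFun x ≤ c
    · exact le_trans (le_min le_rfl hle) (le_max_left _ _)
    · have hcx : (c:ℝ) ≤ (ψ.toFun x : ℝ) := le_of_lt (by
        have := lt_of_not_ge hle
        exact_mod_cast this)
      rw [hξ x hcx]
      refine le_trans ?_ (le_max_right _ _)
      exact Subtype.coe_le_coe.mp (by exact_mod_cast (ψ.toFun x).2.2)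
  have h5 : Φ ψ ≤ max (Φ (minConst ψ c)) (Φ ξ) := by
    rw [← hSup]
    exact hMon _ _ hpw
  rcases max_choice (Φ (minConst ψ c)) (Φ ξ) with he | he <;> rw [he] at h5
  · exfalso
    have h6 : (Φ ψ : ℝ) ≤ (c : ℝ) :=
      le_trans (Subtype.coe_le_coe.mpr h5) (Subtype.coe_le_coe.mpr hφ₀)
    linarith
  · exact Subtype.coe_le_coe.mpr h5

lemma stepCut {Φ : CMap X → I} (hMon : Mon Φ) (hAct : Act T Φ)
    (hMin : MinC Φ) {K : Set X} (ξ : CMap X) (hξK : ∀ y ∈ K, ξ.toFun y = 1)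
    (u s' : I) (hs : Φ ξ ≤ s') (hus : (u:ℝ) < 1 - (s':ℝ)) :
    ∃ ξ' : CMap X, (∀ y ∈ K, ξ'.toFun y = 1) ∧ T.mul u (Φ ξ') = 0 := by
  set χ' := ξ.tsub s' with hχ'def
  have hχ'0 : Φ χ' = 0 := by
    rw [hχ'def, hMin]
    apply Subtype.ext
    show max ((Φ ξ : ℝ) - s') 0 = 0
    rw [max_eq_right (by linarith [Subtype.coe_le_coe.mpr hs])]
  set ξ' := cmapComp (hclamp (u:ℝ) (1 - (s':ℝ))) (hclamp_continuous _ _)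
    (hclamp_monotone hus) χ' with hξ'def
  refine ⟨ξ', ?_, ?_⟩
  · intro y hy
    have hval : (χ'.toFun y : ℝ) = 1 - (s':ℝ) := by
      show max ((ξ.toFun y : ℝ) - s') 0 = 1 - (s':ℝ)
      rw [hξK y hy]
      show max ((1:ℝ) - s') 0 = 1 - (s':ℝ)
      rw [max_eq_left (by linarith [s'.2.2])]
    exact hclamp_eq_one hus (le_of_eq hval.symm)
  · have hpw : ∀ z, (CMap.smul T u ξ').toFun z ≤ χ'.toFun z := by
      intro z
      show T.mul u (ξ'.toFun z) ≤ χ'.toFun z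
      rcases le_or_gt ((χ'.toFun z : I) : ℝ) (u:ℝ) with hcz | hcz
      · have h0 : ξ'.toFun z = 0 := hclamp_eq_zero hus hcz
        rw [h0, T.mul_zero']
        exact Subtype.coe_le_coe.mp (χ'.toFun z).2.1
      · have h1 : T.mul u (ξ'.toFun z) ≤ u := T.mul_le_left _ _
        exact le_trans h1 (Subtype.coe_le_coe.mp (le_of_lt hcz))
    have hsm : Φ (CMap.smul T u ξ') ≤ Φ χ' := hMon _ _ hpw
    rw [hχ'0] at hsm
    have h0 : Φ (CMap.smul T u ξ') = 0 :=
      le_antisymm hsm (Subtype.coe_le_coe.mp (Φ (CMap.smul T u ξ')).2.1)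
    rw [← hAct]
    exact h0

end Steps

section Core
variable {X : Type*} [TopologicalSpace X] [CompactSpace X] [PartialOrder X]
variable (T : ContinuousTNorm)

lemma Icoe_max (p q : I) : ((max p q : I):ℝ) = max (p:ℝ) (q:ℝ) := by
  rcases le_total p q with h | h
  · rw [max_eq_right h, max_eq_right (Subtype.coe_le_coe.mpr h)]
  · rw [max_eq_left h, max_eq_left (Subtype.coe_le_coe.mpr h)]

lemma Icoe_min (p q : I) : ((min p q : I):ℝ) = min (p:ℝ) (q:ℝ) := by
  rcases le_total p q with h | h
  · rw [min_eq_left h, min_eq_left (Subtype.coe_le_coe.mpr h)]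
  · rw [min_eq_right h, min_eq_right (Subtype.coe_le_coe.mpr h)]

lemma core_eq {Φ : CMap X → I} (hMon : Mon Φ) (hAct : Act T Φ) (hSup : SupC Φ)
    (hMin : MinC Φ)
    (hcase : TenLax T Φ ∨ (∀ v : I, v ≠ 0 → ∀ n : ℕ, T.pow v n ≠ 0)) :
    ∀ ψ : CMap X, PhiA (AntiPhi Φ) ψ = Φ ψ := by
  intro ψ
  apply le_antisymm
  · exact PhiA_le fun x hx => hx ψ
  · by_contra hcon
    have hlt : (PhiA (AntiPhi Φ) ψ : ℝ) < (Φ ψ : ℝ) := by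
      exact_mod_cast lt_of_not_ge hcon
    set s : ℝ := (PhiA (AntiPhi Φ) ψ : ℝ) with hsdef
    set t : ℝ := (Φ ψ : ℝ) with htdef
    have hs0 : 0 ≤ s := (PhiA (AntiPhi Φ) ψ).2.1
    have ht1 : t ≤ 1 := (Φ ψ).2.2
    set c : I := ⟨(s+t)/2, by constructor <;> linarith⟩ with hcdef
    have hsc : s < (c:ℝ) := by show s < (s+t)/2; linarith
    have hct : (c:ℝ) < t := by show (s+t)/2 < t; linarith
    have ht0 : 0 < t := by linarith
    have main : ∃ x ∈ AntiPhi Φ, (c:ℝ) ≤ (ψ.toFun x : ℝ) := by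
      by_contra hno
      push_neg at hno
      set K : Set X := {x | (c:ℝ) ≤ (ψ.toFun x : ℝ)} with hKdef
      have hKc : IsClosed K :=
        isClosed_le continuous_const (continuous_subtype_val.comp ψ.continuous')
      rcases eq_empty_or_nonempty K with hKe | hKne
      · have hb : Φ ψ ≤ c := by
          apply Phi_le_of_pointwise_le T hMon hAct hMin
          intro x
          have hxn : x ∉ K := hKe ▸ notMem_empty x
          have hx : ¬ (c:ℝ) ≤ (ψ.toFun x:ℝ) := hxn
          exact Subtype.coe_le_coe.mp (le_of_lt (lt_of_not_ge hx))
        have := Subtype.coe_le_coe.mpr hb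
        simp only [← htdef] at this
        linarith
      · -- per-point functions with Φ = 0, positive at the point
        have hpt : ∀ x : X, x ∈ K → ∃ χ : CMap X, Φ χ = 0 ∧ 0 < ((χ.toFun x):ℝ) := by
          intro x hxK
          have hxA : x ∉ AntiPhi Φ := by
            intro hxA
            exact absurd hxK (not_le.mpr (hno x hxA))
          have hex : ∃ φ : CMap X, Φ φ < φ.toFun x := by
            by_contra hall
            push_neg at hall
            exact hxA fun φ => hall φ
          obtain ⟨φ, hφ⟩ := hex
          refine ⟨φ.tsub (Φ φ), ?_, ?_⟩
          · rw [hMin]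
            apply Subtype.ext
            show max ((Φ φ : ℝ) - (Φ φ : ℝ)) 0 = 0
            simp
          · show 0 < max ((φ.toFun x : ℝ) - (Φ φ : ℝ)) 0
            have : (Φ φ : ℝ) < (φ.toFun x : ℝ) := by exact_mod_cast hφ
            exact lt_of_lt_of_le (by linarith) (le_max_left _ _)
        choose χf hχf0 hχfpos using hpt
        set U : K → Set X := fun i => {y | 0 < ((χf i.1 i.2).toFun y : ℝ)} with hUdef
        have hUo : ∀ i, IsOpen (U i) := fun i =>
          isOpen_lt continuous_const (continuous_subtype_val.comp (χf i.1 i.2).continuous')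
        have hcov : K ⊆ ⋃ i, U i := fun x hx => mem_iUnion.mpr ⟨⟨x, hx⟩, hχfpos x hx⟩
        obtain ⟨tset, htset⟩ := hKc.isCompact.elim_finite_subcover U hUo hcov
        have hcomb : ∀ st : Finset ↑K, ∃ χ : CMap X, Φ χ = 0 ∧
            ∀ y ∈ ⋃ i ∈ st, U i, 0 < ((χ.toFun y):ℝ) := by
          intro st
          classical
          induction st using Finset.induction_on with
          | empty => exact ⟨CMap.smul T 0 CMap.one,
              Phi_zero_of_pointwise_zero T hMon hAct (fun x => T.zero_mul' 1), by simp⟩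
          | @insert a0 st1 ha ih =>
            obtain ⟨χs, h1, h2⟩ := ih
            refine ⟨(χf a0.1 a0.2).sup χs, ?_, ?_⟩
            · rw [hSup, hχf0 a0.1 a0.2, h1]
              simp
            · intro y hy
              simp only [Finset.mem_insert, mem_iUnion, exists_prop] at hy
              obtain ⟨i, hi | hi, hyU⟩ := hy
              · rw [hi] at hyU
                show 0 < ((max ((χf a0.1 a0.2).toFun y) (χs.toFun y) : I) : ℝ)
                rw [Icoe_max]
                exact lt_of_lt_of_le hyU (le_max_left _ _)
              · show 0 < ((max ((χf a0.1 a0.2).toFun y) (χs.toFun y) : I) : ℝ)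
                rw [Icoe_max]
                refine lt_of_lt_of_le ?_ (le_max_right _ _)
                exact h2 y (mem_iUnion₂.mpr ⟨i, hi, hyU⟩)
        obtain ⟨χ, hχ0, hχpos⟩ := hcomb tset
        have hχposK : ∀ y ∈ K, 0 < ((χ.toFun y):ℝ) := fun y hy => hχpos y (htset hy)
        obtain ⟨xm, hxm, hmin⟩ := hKc.isCompact.exists_isMinOn hKne
          ((continuous_subtype_val.comp χ.continuous').continuousOn)
        set δ : ℝ := (χ.toFun xm : ℝ) with hδdef
        have hδ0 : 0 < δ := hχposK xm hxm
        have hδ1 : δ ≤ 1 := (χ.toFun xm).2.2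
        set u0 : I := ⟨δ/2, by constructor <;> linarith⟩ with hu0def
        have hhalf : δ/2 < δ := by linarith
        set ξ0 : CMap X := cmapComp (hclamp (δ/2) δ) (hclamp_continuous _ _)
          (hclamp_monotone hhalf) χ with hξ0def
        have hξ0K : ∀ y ∈ K, ξ0.toFun y = 1 := fun y hy => hclamp_eq_one hhalf (hmin hy)
        have hpw0 : ∀ z, (CMap.smul T u0 ξ0).toFun z ≤ χ.toFun z := by
          intro z
          show T.mul u0 (ξ0.toFun z) ≤ χ.toFun z
          rcases le_or_gt ((χ.toFun z):ℝ) (δ/2) with hcz | hcz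
          · have h0 : ξ0.toFun z = 0 := hclamp_eq_zero hhalf hcz
            rw [h0, T.mul_zero']
            exact Subtype.coe_le_coe.mp (χ.toFun z).2.1
          · refine le_trans (T.mul_le_left _ _) ?_
            exact Subtype.coe_le_coe.mp (le_of_lt hcz)
        have hmul0 : T.mul u0 (Φ ξ0) = 0 := by
          rw [← hAct]
          apply le_antisymm
          · have := hMon _ _ hpw0
            rwa [hχ0] at this
          · exact Subtype.coe_le_coe.mp (Φ (CMap.smul T u0 ξ0)).2.1
        have hstepA0 : t ≤ (Φ ξ0 : ℝ) :=
          stepA T hMon hAct hSup hMin hct ξ0 (fun y hyc => hξ0K y hyc)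
        rcases hcase with hTen | hNil
        · -- TenLax case
          set GS : Set ℝ := {r | ∃ ξ : CMap X, (∀ y ∈ K, ξ.toFun y = 1) ∧ (Φ ξ : ℝ) = r}
            with hGSdef
          have hGne : GS.Nonempty := ⟨(Φ ξ0 : ℝ), ξ0, hξ0K, rfl⟩
          have hGbdd : BddBelow GS := ⟨0, by rintro r ⟨ξ, _, rfl⟩; exact (Φ ξ).2.1⟩
          have hGt : ∀ r ∈ GS, t ≤ r := by
            rintro r ⟨ξ, hξK, rfl⟩
            exact stepA T hMon hAct hSup hMin hct ξ (fun y hyc => hξK y hyc)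
          set q : ℝ := sInf GS with hqdef
          have hqt : t ≤ q := le_csInf hGne hGt
          have hq0 : 0 < q := lt_of_lt_of_le ht0 hqt
          have hξ0lt1 : (Φ ξ0 : ℝ) < 1 := by
            rcases lt_or_eq_of_le ((Φ ξ0).2.2) with h | h
            · exact h
            · exfalso
              have h1 : Φ ξ0 = 1 := Subtype.ext h
              rw [h1, T.mul_one'] at hmul0
              have : δ/2 = 0 := congrArg Subtype.val hmul0
              linarith
          have hq1 : q < 1 := lt_of_le_of_lt (csInf_le hGbdd ⟨ξ0, hξ0K, rfl⟩) hξ0lt1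
          set qI : I := ⟨q, le_of_lt hq0, le_of_lt hq1⟩ with hqIdef
          have hidem : T.mul qI qI = qI := by
            apply le_antisymm (T.mul_le_left qI qI)
            by_contra hltq
            have hlt2 : ((T.mul qI qI :I):ℝ) < q := by
              have h5 : T.mul qI qI < qI := lt_of_not_ge hltq
              exact_mod_cast h5
            have hopen : IsOpen {a : I | ((T.mul a a :I):ℝ) < q} := by
              apply isOpen_lt _ continuous_const
              exact continuous_subtype_val.comp
                (T.continuous.comp (continuous_id.prodMk continuous_id))
            obtain ⟨ε, hε, hball⟩ := Metric.isOpen_iff.mp hopen qI hlt2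
            obtain ⟨r, hrGS, hrlt⟩ := exists_lt_of_csInf_lt hGne (lt_add_of_pos_right q hε)
            have hrq : q ≤ r := csInf_le hGbdd hrGS
            obtain ⟨ξr, hξrK, hξrval⟩ := hrGS
            have hmem : Φ ξr ∈ Metric.ball qI ε := by
              rw [Metric.mem_ball, Subtype.dist_eq]
              show dist ((Φ ξr : I):ℝ) q < ε
              rw [Real.dist_eq, hξrval, abs_of_nonneg (by linarith)]
              linarith
            have hgball : ((T.mul (Φ ξr) (Φ ξr) : I):ℝ) < q := hball hmem
            have htensK : ∀ y ∈ K, (CMap.tens T ξr ξr).toFun y = 1 := by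
              intro y hy
              show T.mul (ξr.toFun y) (ξr.toFun y) = 1
              rw [hξrK y hy]
              exact T.one_mul' 1
            have htensGS : (Φ (CMap.tens T ξr ξr) : ℝ) ∈ GS := ⟨_, htensK, rfl⟩
            have hge : q ≤ (Φ (CMap.tens T ξr ξr) : ℝ) := csInf_le hGbdd htensGS
            have hten : (Φ (CMap.tens T ξr ξr) : ℝ) ≤ ((T.mul (Φ ξr) (Φ ξr) : I) : ℝ) :=
              Subtype.coe_le_coe.mpr (hTen ξr ξr)
            linarith
          set u' : ℝ := min q ((1-q)/2) with hu'def
          have hu'0 : 0 < u' := lt_min hq0 (by linarith)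
          set uI : I := ⟨u', le_of_lt hu'0, le_trans (min_le_left _ _) (le_of_lt hq1)⟩
            with huIdef
          obtain ⟨s', hs'GS, hs'lt⟩ := exists_lt_of_csInf_lt hGne
            (show q < (1+q)/2 by linarith)
          obtain ⟨ξs, hξsK, hξsval⟩ := hs'GS
          have hucond : (uI:ℝ) < 1 - ((Φ ξs : I):ℝ) := by
            show u' < 1 - (Φ ξs : ℝ)
            rw [hξsval]
            have := min_le_right q ((1-q)/2)
            linarith
          obtain ⟨ξ', hξ'K, hξ'mul⟩ :=
            stepCut T hMon hAct hMin ξs hξsK uI (Φ ξs) le_rfl hucond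
          have hξ'GS : (Φ ξ' : ℝ) ∈ GS := ⟨ξ', hξ'K, rfl⟩
          have hqξ' : q ≤ (Φ ξ' : ℝ) := csInf_le hGbdd hξ'GS
          have huq : uI ≤ qI := Subtype.mk_le_mk.mpr (min_le_left _ _)
          have hqΦ : qI ≤ Φ ξ' := Subtype.coe_le_coe.mp hqξ'
          have hmulq : T.mul qI uI = uI := T.idem_mul hidem huq
          have hfin : uI ≤ T.mul uI (Φ ξ') := by
            calc uI = T.mul qI uI := hmulq.symm
              _ ≤ T.mul (Φ ξ') uI := T.mono hqΦ le_rfl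
              _ = T.mul uI (Φ ξ') := T.comm _ _
          rw [hξ'mul] at hfin
          have : u' ≤ 0 := Subtype.coe_le_coe.mpr hfin
          linarith
        · -- no-nilpotent case
          have hΦξ0pos : 0 < (Φ ξ0 : ℝ) := lt_of_lt_of_le ht0 hstepA0
          set w : I := min u0 (Φ ξ0) with hwdef
          have hw0 : 0 < (w:ℝ) := by
            rw [hwdef, Icoe_min]
            have hu0r : (u0:ℝ) = δ/2 := rfl
            rw [hu0r]
            exact lt_min (by linarith) hΦξ0pos
          have hw2 : T.pow w 2 = 0 := by
            have e : T.pow w 2 = T.mul w (T.mul w 1) := rfl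
            rw [e, T.mul_one']
            apply le_antisymm
            · rw [← hmul0]
              exact T.mono (min_le_left _ _) (min_le_right _ _)
            · exact Subtype.coe_le_coe.mp (T.mul w w).2.1
          exact hNil w (fun h => by rw [h] at hw0; norm_num at hw0) 2 hw2
    obtain ⟨x, hxA, hxc⟩ := main
    have hxs : (ψ.toFun x : ℝ) ≤ s := Subtype.coe_le_coe.mpr (le_PhiA hxA)
    linarith

end Core

/-- `A ↦ Φ_A` is a bijection from closed upper subsets of `X` onto the maps
`Φ : CX → [0,1]` satisfying `(Mon)`, `(Act)`, `(Sup)`, `(Ten)lax` and `(Min)`; when the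
t-norm has no nilpotent elements, `(Ten)lax` can be dropped. -/
theorem phiA_bijective (T : ContinuousTNorm) {X : Type*} [TopologicalSpace X] [CompactSpace X]
    [PartialOrder X] (hle : IsClosed {p : X × X | p.1 ≤ p.2}) :
    Set.BijOn (fun A : Set X => PhiA A) {A : Set X | IsClosed A ∧ IsUpperSet A}
      {Φ : CMap X → I | Mon Φ ∧ Act T Φ ∧ SupC Φ ∧ TenLax T Φ ∧ MinC Φ} ∧
    ((∀ v : I, v ≠ 0 → ∀ n : ℕ, T.pow v n ≠ 0) →
      Set.BijOn (fun A : Set X => PhiA A) {A : Set X | IsClosed A ∧ IsUpperSet A}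
        {Φ : CMap X → I | Mon Φ ∧ Act T Φ ∧ SupC Φ ∧ MinC Φ}) := by
  have hinj : Set.InjOn (fun A : Set X => PhiA A) {A : Set X | IsClosed A ∧ IsUpperSet A} :=
    phiA_injOn hle
  constructor
  · refine ⟨?_, hinj, ?_⟩
    · rintro A ⟨hA, hAu⟩
      exact ⟨PhiA_mon A, PhiA_act T hA, PhiA_sup A, PhiA_tenlax T A, PhiA_min hA⟩
    · rintro Φ ⟨hMon, hAct, hSup, hTen, hMin⟩
      exact ⟨AntiPhi Φ, ⟨AntiPhi_isClosed, AntiPhi_isUpperSet⟩,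
        funext (core_eq T hMon hAct hSup hMin (Or.inl hTen))⟩
  · intro hNil
    refine ⟨?_, hinj, ?_⟩
    · rintro A ⟨hA, hAu⟩
      exact ⟨PhiA_mon A, PhiA_act T hA, PhiA_sup A, PhiA_min hA⟩
    · rintro Φ ⟨hMon, hAct, hSup, hMin⟩
      exact ⟨AntiPhi Φ, ⟨AntiPhi_isClosed, AntiPhi_isUpperSet⟩,
        funext (core_eq T hMon hAct hSup hMin (Or.inr hNil))⟩
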